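/- Let E be a real inner product space, 0 < ε < ε', k > 0, x_d ∈ E, and let κ be the smoothed controller κ(x) = κ₀(x) − max(0, φ(x)) · min(0, ⟪g(x), κ₀(x)⟫) · g(x) with φ(x) = min(1, (ε' − b(x))/(ε' − ε)) and κ₀(x) = −k(x − x_d). Assume ‖g(y)‖ ≤ 1 for every y ∈ E. Then for every differentiable curve x : ℝ → E satisfying x'(t) = κ(x(t)) for all t ≥ 0, the function t ↦ ‖x(t) − x_d‖ is non-increasing on [0, ∞). -/

import Mathlib

open scoped RealInnerProductSpace

/-- Monotonicity (Theorem 2). Along any trajectory of the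
closed-loop system `ẋ = κ(x)` with the nominal controller `κ₀(x) = −k(x − x_d)`
and `‖g‖ ≤ 1`, the distance `t ↦ ‖x(t) − x_d‖` is non-increasing on `[0, ∞)`. -/
theorem distance_to_goal_antitone
    {E : Type*} [NormedAddCommGroup E] [InnerProductSpace ℝ E]
    (ε ε' : ℝ) (hε : 0 < ε) (hεε' : ε < ε')
    (k : ℝ) (hk : 0 < k) (xd : E)
    (b : E → ℝ) (g κ₀ : E → E)
    (hκ₀ : ∀ x, κ₀ x = -(k • (x - xd)))
    (hgnorm : ∀ y, ‖g y‖ ≤ 1)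
    (φ : E → ℝ) (hφ : ∀ x, φ x = min 1 ((ε' - b x) / (ε' - ε)))
    (κ : E → E)
    (hκ : ∀ x, κ x = κ₀ x - (max 0 (φ x) * min 0 ⟪g x, κ₀ x⟫) • g x)
    (x : ℝ → E)
    (hx : ∀ t ∈ Set.Ici (0 : ℝ), HasDerivAt x (κ (x t)) t) :
    AntitoneOn (fun t => ‖x t - xd‖) (Set.Ici 0) := by
  -- key pointwise inequality: ⟪y - xd, κ y⟫ ≤ 0
  have key : ∀ y : E, ⟪y - xd, κ y⟫ ≤ 0 := by
    intro y
    set v := y - xd with hv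
    have hκ0y : κ₀ y = -(k • v) := hκ₀ y
    have ha0 : (0:ℝ) ≤ max 0 (φ y) := le_max_left _ _
    have ha1 : max 0 (φ y) ≤ 1 := by
      apply max_le (by norm_num)
      rw [hφ y]; exact min_le_left _ _
    have hgk : ⟪g y, κ₀ y⟫ = -(k * ⟪g y, v⟫) := by
      rw [hκ0y, inner_neg_right, real_inner_smul_right]
    have hvk0 : ⟪v, κ₀ y⟫ = -(k * ‖v‖^2) := by
      rw [hκ0y, inner_neg_right, real_inner_smul_right, real_inner_self_eq_norm_sq]
    have hexp : ⟪v, κ y⟫ =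
        ⟪v, κ₀ y⟫ - (max 0 (φ y) * min 0 ⟪g y, κ₀ y⟫) * ⟪v, g y⟫ := by
      rw [hκ y, inner_sub_right, real_inner_smul_right]
    rw [hexp, hvk0, hgk]
    have hgv2 : ⟪g y, v⟫ = ⟪v, g y⟫ := real_inner_comm _ _
    rw [hgv2]
    set s := ⟪v, g y⟫ with hs
    have hcs : |s| ≤ ‖v‖ := by
      calc |s| ≤ ‖v‖ * ‖g y‖ := abs_real_inner_le_norm _ _
        _ ≤ ‖v‖ * 1 := by
            exact mul_le_mul_of_nonneg_left (hgnorm y) (norm_nonneg v)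
        _ = ‖v‖ := mul_one _
    have hs2 : s^2 ≤ ‖v‖^2 := by
      have := sq_abs s
      nlinarith [abs_nonneg s, norm_nonneg v]
    rcases le_or_gt s 0 with hsle | hsgt
    · have : min 0 (-(k * s)) = 0 := by
        apply min_eq_left
        nlinarith
      rw [this]
      nlinarith [sq_nonneg ‖v‖]
    · have : min 0 (-(k * s)) = -(k * s) := by
        apply min_eq_right
        nlinarith
      rw [this]
      set a := max 0 (φ y)
      have : a * s^2 ≤ ‖v‖^2 := by
        calc a * s^2 ≤ 1 * s^2 := by nlinarith [sq_nonneg s]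
          _ = s^2 := one_mul _
          _ ≤ ‖v‖^2 := hs2
      nlinarith
  -- f = squared distance
  set f : ℝ → ℝ := fun t => ‖x t - xd‖^2 with hf
  have hderiv : ∀ t ∈ Set.Ici (0:ℝ),
      HasDerivAt f (2 * ⟪x t - xd, κ (x t)⟫) t := by
    intro t ht
    have hu : HasDerivAt (fun t => x t - xd) (κ (x t)) t := (hx t ht).sub_const xd
    have := (hu.inner ℝ hu)
    have h2 : (⟪x t - xd, κ (x t)⟫ + ⟪κ (x t), x t - xd⟫)
        = 2 * ⟪x t - xd, κ (x t)⟫ := by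
      rw [real_inner_comm]; ring
    have h3 : HasDerivAt (fun t => ⟪x t - xd, x t - xd⟫)
        (2 * ⟪x t - xd, κ (x t)⟫) t := h2 ▸ this
    have h4 : (fun t => ⟪x t - xd, x t - xd⟫) = f := by
      funext t; rw [hf, real_inner_self_eq_norm_sq]
    rwa [h4] at h3
  have hcont : ContinuousOn f (Set.Ici 0) := fun t ht =>
    (hderiv t ht).continuousAt.continuousWithinAt
  have hanti : AntitoneOn f (Set.Ici 0) := by
    apply antitoneOn_of_deriv_nonpos (convex_Ici 0) hcont
    · intro t ht
      rw [interior_Ici] at ht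
      exact (hderiv t (Set.Ioi_subset_Ici_self ht)).differentiableAt.differentiableWithinAt
    · intro t ht
      rw [interior_Ici] at ht
      rw [(hderiv t (Set.Ioi_subset_Ici_self ht)).deriv]
      have := key (x t)
      nlinarith
  intro s hs t ht hst
  have hfle : f t ≤ f s := hanti hs ht hst
  have := Real.sqrt_le_sqrt hfle
  rwa [hf, Real.sqrt_sq (norm_nonneg _), Real.sqrt_sq (norm_nonneg _)] at this
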